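/- Let Ω ⊆ ℂ be an open set and let K ⊆ Ω be a compact subset. Then there exists a compact set K̂ with K ⊆ K̂ ⊆ Ω such that K̂ is faithful to Ω, i.e. every connected component of the complement of K̂ in the Riemann sphere ℂ ∪ {∞} intersects the complement of Ω in the Riemann sphere. -/

import Mathlib

open Pointwise Set Metric OnePoint

lemma aux_isConnected_compl_closedBall (R : ℝ) (hR : 0 ≤ R) :
    IsConnected ((Metric.closedBall (0:ℂ) R)ᶜ) := by
  have h2 : (1:Cardinal) < Module.rank ℝ ℂ := by
    rw [Complex.rank_real_complex]; exact Nat.one_lt_ofNat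
  have h0 : IsConnected ({(0:ℂ)}ᶜ) := isConnected_compl_singleton_of_one_lt_rank h2 0
  have key : (fun z : ℂ => (1 + R / ‖z‖) • z) '' {(0:ℂ)}ᶜ = (Metric.closedBall (0:ℂ) R)ᶜ := by
    ext w
    simp only [mem_image, mem_compl_iff, mem_singleton_iff, Metric.mem_closedBall,
      dist_zero_right, not_le]
    constructor
    · rintro ⟨z, hz, rfl⟩
      have hz' : ‖z‖ ≠ 0 := norm_ne_zero_iff.mpr hz
      have hpos : (0:ℝ) < ‖z‖ := lt_of_le_of_ne (norm_nonneg z) (Ne.symm hz')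
      rw [norm_smul, Real.norm_eq_abs, abs_of_nonneg (by positivity)]
      rw [add_mul, one_mul, div_mul_cancel₀ _ hz']
      linarith
    · intro hw
      have hwpos : (0:ℝ) < ‖w‖ := lt_of_le_of_lt hR hw
      have hw' : ‖w‖ ≠ 0 := ne_of_gt hwpos
      have ht : (0:ℝ) < 1 - R / ‖w‖ := by
        have : R / ‖w‖ < 1 := (div_lt_one hwpos).mpr hw
        linarith
      refine ⟨(1 - R / ‖w‖) • w, smul_ne_zero (ne_of_gt ht) (norm_ne_zero_iff.mp hw'), ?_⟩
      have hn : ‖(1 - R / ‖w‖) • w‖ = ‖w‖ - R := by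
        rw [norm_smul, Real.norm_eq_abs, abs_of_pos ht, sub_mul, one_mul,
          div_mul_cancel₀ _ hw']
      rw [hn, smul_smul]
      obtain ⟨a, ha⟩ : ∃ a : ℝ, a = ‖w‖ := ⟨‖w‖, rfl⟩
      rw [← ha] at hw hw' hwpos ⊢
      have h3 : a - R ≠ 0 := by linarith
      have h1 : (1 + R / (a - R)) * (1 - R / a) = 1 := by
        field_simp
        ring
      rw [h1, one_smul]
  rw [← key]
  apply h0.image
  apply ContinuousOn.smul (f := fun z : ℂ => 1 + R / ‖z‖) (g := id) _ continuousOn_id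
  apply ContinuousOn.add continuousOn_const
  exact continuousOn_const.div (continuous_norm.continuousOn) (fun z hz => norm_ne_zero_iff.mpr hz)

lemma aux_infty_mem_closure (R : ℝ) :
    (∞ : OnePoint ℂ) ∈ closure ((fun w : ℂ => (w : OnePoint ℂ)) '' (Metric.closedBall (0:ℂ) R)ᶜ) := by
  rw [mem_closure_iff_nhds_basis OnePoint.hasBasis_nhds_infty]
  rintro s ⟨hsc, hscomp⟩
  obtain ⟨R', hR'⟩ := hscomp.isBounded.subset_closedBall (0:ℂ)
  set M : ℝ := max (max R R') 0 + 1 with hMdef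
  have hMpos : (0:ℝ) < M := by positivity
  have hnorm : ‖(M:ℂ)‖ = M := by
    rw [Complex.norm_real, Real.norm_eq_abs, abs_of_pos hMpos]
  have hRM : R < M := by
    have := le_max_left R R'
    have := le_max_left (max R R') 0
    simp only [hMdef]
    have h := le_max_left R R'
    have h2 := (le_max_left R R').trans (le_max_left (max R R') 0)
    linarith
  have hR'M : R' < M := by
    have h2 := (le_max_right R R').trans (le_max_left (max R R') 0)
    simp only [hMdef]; linarith
  have h1 : (M:ℂ) ∈ (Metric.closedBall (0:ℂ) R)ᶜ := by
    simp only [mem_compl_iff, Metric.mem_closedBall, dist_zero_right, hnorm, not_le]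
    exact hRM
  have h2 : (M:ℂ) ∈ sᶜ := by
    intro h
    have := hR' h
    rw [Metric.mem_closedBall, dist_zero_right, hnorm] at this
    linarith
  exact ⟨((M:ℂ) : OnePoint ℂ), ⟨(M:ℂ), h1, rfl⟩, mem_union_left _ ⟨(M:ℂ), h2, rfl⟩⟩

instance : LocallyConnectedSpace (OnePoint ℂ) := by
  rw [locallyConnectedSpace_iff_connected_subsets]
  intro x U hU
  induction x using OnePoint.rec with
  | infty =>
    obtain ⟨s, ⟨hsc, hscomp⟩, hsU⟩ := OnePoint.hasBasis_nhds_infty.mem_iff.mp hU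
    obtain ⟨R0, hR0⟩ := hscomp.isBounded.subset_closedBall (0:ℂ)
    set R : ℝ := max R0 0 with hRdef
    have hsub : s ⊆ Metric.closedBall (0:ℂ) R :=
      hR0.trans (Metric.closedBall_subset_closedBall (le_max_left _ _))
    set A : Set (OnePoint ℂ) := (fun w : ℂ => (w : OnePoint ℂ)) '' (Metric.closedBall (0:ℂ) R)ᶜ
    refine ⟨A ∪ {∞}, ?_, ?_, ?_⟩
    · exact OnePoint.hasBasis_nhds_infty.mem_of_mem (i := Metric.closedBall (0:ℂ) R)
        ⟨Metric.isClosed_closedBall, isCompact_closedBall _ _⟩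
    · have hA : IsPreconnected A :=
        ((aux_isConnected_compl_closedBall R (le_max_right _ _)).image _
          OnePoint.continuous_coe.continuousOn).isPreconnected
      refine hA.subset_closure subset_union_left (union_subset subset_closure ?_)
      simpa using aux_infty_mem_closure R
    · refine union_subset ?_ (by
        intro p hp; rw [mem_singleton_iff] at hp; subst hp
        exact hsU (mem_union_right _ rfl))
      intro p hp
      obtain ⟨z, hz, rfl⟩ := hp
      exact hsU (mem_union_left _ ⟨z, fun h => hz (hsub h), rfl⟩)
  | coe z =>
    rw [OnePoint.nhds_coe_eq, Filter.mem_map] at hU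
    obtain ⟨ε, hε, hball⟩ := Metric.mem_nhds_iff.mp hU
    refine ⟨(fun w : ℂ => (w : OnePoint ℂ)) '' Metric.ball z ε, ?_, ?_, ?_⟩
    · exact (OnePoint.isOpenEmbedding_coe.isOpenMap _ Metric.isOpen_ball).mem_nhds
        ⟨z, Metric.mem_ball_self hε, rfl⟩
    · exact ((convex_ball z ε).isPreconnected.image _ OnePoint.continuous_coe.continuousOn)
    · exact image_subset_iff.mpr hball

/-- Every compact subset `K` of an open set `Ω ⊆ ℂ` is contained in a compact set
`K̂ ⊆ Ω` that is faithful to `Ω`. -/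
theorem exists_faithful_compact_extension (Ω : Set ℂ) (hΩ : IsOpen Ω)
    (K : Set ℂ) (hK : IsCompact K) (hKΩ : K ⊆ Ω) :
    ∃ Khat : Set ℂ, IsCompact Khat ∧ K ⊆ Khat ∧ Khat ⊆ Ω ∧
      ∀ p : OnePoint ℂ, p ∉ (fun w : ℂ => (w : OnePoint ℂ)) '' Khat →
        (connectedComponentIn ((fun w : ℂ => (w : OnePoint ℂ)) '' Khat)ᶜ p ∩
          ((fun w : ℂ => (w : OnePoint ℂ)) '' Ω)ᶜ).Nonempty := by
  set e : ℂ → OnePoint ℂ := fun w => (w : OnePoint ℂ) with he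
  set K' : Set (OnePoint ℂ) := e '' K with hK'def
  set Ω' : Set (OnePoint ℂ) := e '' Ω with hΩ'def
  have hK'Ω' : K' ⊆ Ω' := image_mono hKΩ
  have hK'compact : IsCompact K' := hK.image OnePoint.continuous_coe
  have hK'closed : IsClosed K' := hK'compact.isClosed
  have hopen : IsOpen K'ᶜ := hK'closed.isOpen_compl
  set bad : Set (OnePoint ℂ) := ⋃ q ∈ Ω'ᶜ, connectedComponentIn K'ᶜ q with hbaddef
  have hbadopen : IsOpen bad :=
    isOpen_biUnion fun q _ => hopen.connectedComponentIn
  have hbadsub : bad ⊆ K'ᶜ :=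
    iUnion₂_subset fun q _ => connectedComponentIn_subset _ _
  have hΩ'c_sub : Ω'ᶜ ⊆ bad := by
    intro q hq
    exact mem_biUnion hq (mem_connectedComponentIn (fun h => hq (hK'Ω' h)))
  set Khat' : Set (OnePoint ℂ) := badᶜ with hKhat'def
  have hK'Khat' : K' ⊆ Khat' := fun p hp hmem => hbadsub hmem hp
  have hKhat'Ω' : Khat' ⊆ Ω' := fun p hp => by
    by_contra h
    exact hp (hΩ'c_sub h)
  have hinfty : (∞ : OnePoint ℂ) ∉ Khat' := by
    intro h
    obtain ⟨z, _, hz⟩ := hKhat'Ω' h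
    exact OnePoint.coe_ne_infty z hz
  set Khat : Set ℂ := e ⁻¹' Khat' with hKhatdef
  have himg : e '' Khat = Khat' := by
    refine Subset.antisymm (image_preimage_subset _ _) ?_
    intro p hp
    induction p using OnePoint.rec with
    | infty => exact absurd hp hinfty
    | coe z => exact ⟨z, hp, rfl⟩
  have hKhatcompact : IsCompact Khat := by
    have h1 : IsCompact Khat' := hbadopen.isClosed_compl.isCompact
    rw [← himg] at h1
    exact OnePoint.isOpenEmbedding_coe.isEmbedding.isCompact_iff.mpr h1
  refine ⟨Khat, hKhatcompact, ?_, ?_, ?_⟩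
  · exact fun z hz => hK'Khat' ⟨z, hz, rfl⟩
  · intro z hz
    obtain ⟨w, hw, hwz⟩ := hKhat'Ω' hz
    rwa [show w = z from OnePoint.coe_injective hwz] at hw
  · intro p hp
    rw [himg] at hp ⊢
    have hpbad : p ∈ bad := not_not.mp hp
    obtain ⟨q, hq, hpq⟩ := mem_iUnion₂.mp hpbad
    have hCsub : connectedComponentIn K'ᶜ q ⊆ badᶜᶜ := by
      rw [compl_compl]
      exact fun r hr => mem_biUnion hq hr
    have hC : connectedComponentIn K'ᶜ q ⊆ connectedComponentIn badᶜᶜ p :=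
      isPreconnected_connectedComponentIn.subset_connectedComponentIn hpq hCsub
    exact ⟨q, hC (mem_connectedComponentIn (fun h => hq (hK'Ω' h))), hq⟩
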